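/- Fix x > 0 and c > 0. For H > x let z_H denote the unique real number with Φ(z_H) = x/H, where Φ is the standard normal cumulative distribution function, and define g(H) = H·Φ(z_H + c). Then g is differentiable on (x,∞) with g'(H) = Φ(z_H + c) − (x/H)·exp(−c·z_H − c²/2), and g'(H) > 0 for all H > x; in particular g is strictly increasing on (x,∞). -/

import Mathlib

open Real Set Filter MeasureTheory Topology

/-- The standard normal cumulative distribution function. -/
noncomputable def stdNormalCdf : ℝ → ℝ :=
  fun t => ∫ u in Iic t, Real.exp (-u ^ 2 / 2) / Real.sqrt (2 * Real.pi)

/-- The standard normal density. -/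
noncomputable def stdPdf : ℝ → ℝ :=
  fun u => Real.exp (-u ^ 2 / 2) / Real.sqrt (2 * Real.pi)

lemma stdPdf_pos (u : ℝ) : 0 < stdPdf u :=
  div_pos (Real.exp_pos _) (Real.sqrt_pos.2 (by positivity))

lemma stdPdf_cont : Continuous stdPdf := by
  unfold stdPdf; fun_prop

lemma stdPdf_integrable : Integrable stdPdf := by
  have h : Integrable fun u : ℝ => Real.exp (-(1/2 : ℝ) * u ^ 2) :=
    integrable_exp_neg_mul_sq (by norm_num)
  have h2 := h.div_const (Real.sqrt (2 * Real.pi))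
  have : stdPdf = fun u : ℝ => Real.exp (-(1/2 : ℝ) * u ^ 2) / Real.sqrt (2 * Real.pi) := by
    funext u
    have : -u ^ 2 / 2 = -(1/2 : ℝ) * u ^ 2 := by ring
    rw [stdPdf, this]
  rw [this]; exact h2

lemma stdNormalCdf_eq (t : ℝ) : stdNormalCdf t = ∫ u in Iic t, stdPdf u := rfl

lemma stdNormalCdf_hasDerivAt (t : ℝ) : HasDerivAt stdNormalCdf (stdPdf t) t := by
  have key : ∀ s : ℝ, stdNormalCdf s = stdNormalCdf 0 + ∫ u in (0:ℝ)..s, stdPdf u := by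
    intro s
    have h := intervalIntegral.integral_Iic_sub_Iic
      (stdPdf_integrable.integrableOn (s := Iic (0:ℝ)))
      (stdPdf_integrable.integrableOn (s := Iic s))
    rw [stdNormalCdf_eq, stdNormalCdf_eq]
    linarith
  have hd : HasDerivAt (fun s => stdNormalCdf 0 + ∫ u in (0:ℝ)..s, stdPdf u) (stdPdf t) t := by
    have h := intervalIntegral.integral_hasDerivAt_right
      (stdPdf_integrable.intervalIntegrable (a := 0) (b := t))
      (stdPdf_cont.stronglyMeasurableAtFilter _ _)
      (stdPdf_cont.continuousAt)
    exact h.const_add _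
  have : stdNormalCdf = fun s => stdNormalCdf 0 + ∫ u in (0:ℝ)..s, stdPdf u := funext key
  rw [this]; exact hd

lemma stdNormalCdf_strictMono : StrictMono stdNormalCdf := by
  intro a b hab
  have h := intervalIntegral.integral_Iic_sub_Iic
    (stdPdf_integrable.integrableOn (s := Iic a))
    (stdPdf_integrable.integrableOn (s := Iic b))
  have hpos : 0 < ∫ u in a..b, stdPdf u :=
    intervalIntegral.intervalIntegral_pos_of_pos
      (stdPdf_integrable.intervalIntegrable) (fun u => stdPdf_pos u) hab
  rw [stdNormalCdf_eq, stdNormalCdf_eq]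
  linarith

lemma stdPdf_translate (c u : ℝ) :
    stdPdf (u + c) = stdPdf u * Real.exp (-c * u - c ^ 2 / 2) := by
  rw [stdPdf, stdPdf, div_mul_eq_mul_div, ← Real.exp_add]
  congr 1
  ring

lemma translate_setIntegral (z c : ℝ) :
    (∫ u in Iic z, stdPdf (u + c)) = ∫ u in Iic (z + c), stdPdf u := by
  have h := (measurePreserving_add_right volume c).setIntegral_preimage_emb
    (measurableEmbedding_addRight c) stdPdf (Iic (z + c))
  have hpre : ((fun u : ℝ => u + c) ⁻¹' Iic (z + c)) = Iic z := by
    ext u; simp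
  rwa [hpre] at h

lemma integrable_translate (c : ℝ) : Integrable (fun u : ℝ => stdPdf (u + c)) :=
  ((measurePreserving_add_right volume c).integrable_comp_emb
    (measurableEmbedding_addRight c)).2 stdPdf_integrable

lemma key_ineq (c : ℝ) (hc : 0 < c) (z : ℝ) :
    stdNormalCdf z * Real.exp (-c * z - c ^ 2 / 2) < stdNormalCdf (z + c) := by
  set k := Real.exp (-c * z - c ^ 2 / 2) with hk
  set f : ℝ → ℝ := fun u => stdPdf (u + c) - k * stdPdf u with hf
  have hfint : IntegrableOn f (Iic z) :=
    ((integrable_translate c).sub (stdPdf_integrable.const_mul k)).integrableOn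
  have hnonneg : ∀ u ∈ Iic z, 0 ≤ f u := by
    intro u hu
    have h1 : k ≤ Real.exp (-c * u - c ^ 2 / 2) := by
      apply Real.exp_le_exp.2
      have : u ≤ z := hu
      nlinarith
    have h2 := stdPdf_pos u
    have h3 := stdPdf_translate c u
    simp only [hf]
    nlinarith
  have hpos : ∀ u < z, 0 < f u := by
    intro u hu
    have h1 : k < Real.exp (-c * u - c ^ 2 / 2) := by
      apply Real.exp_lt_exp.2
      nlinarith
    have h2 := stdPdf_pos u
    have h3 := stdPdf_translate c u
    simp only [hf]
    nlinarith
  have hposint : 0 < ∫ u in Iic z, f u := by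
    rw [setIntegral_pos_iff_support_of_nonneg_ae ?_ hfint]
    · refine lt_of_lt_of_le ?_ (measure_mono
        (show Iio z ⊆ Function.support f ∩ Iic z from
          fun u hu => ⟨(hpos u hu).ne', mem_Iic.2 (le_of_lt (mem_Iio.1 hu))⟩))
      rw [Real.volume_Iio]
      exact ENNReal.zero_lt_top
    · rw [EventuallyLE, ae_restrict_iff' measurableSet_Iic]
      exact Eventually.of_forall fun u hu => hnonneg u hu
  have hsplit : (∫ u in Iic z, f u)
      = stdNormalCdf (z + c) - k * stdNormalCdf z := by
    simp only [hf]
    rw [integral_sub ((integrable_translate c).integrableOn)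
      ((stdPdf_integrable.const_mul k).integrableOn),
      integral_const_mul, translate_setIntegral, stdNormalCdf_eq, stdNormalCdf_eq]
  rw [hsplit] at hposint
  linarith

theorem stmt_14 (x c : ℝ) (hx : 0 < x) (hc : 0 < c)
    (Z : ℝ → ℝ) (hZ : ∀ H > x, stdNormalCdf (Z H) = x / H) :
    let g : ℝ → ℝ := fun H => H * stdNormalCdf (Z H + c)
    (∀ H > x,
      HasDerivAt g
        (stdNormalCdf (Z H + c) - (x / H) * Real.exp (-c * Z H - c ^ 2 / 2)) H ∧
      0 < stdNormalCdf (Z H + c) - (x / H) * Real.exp (-c * Z H - c ^ 2 / 2)) ∧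
    StrictMonoOn g (Ioi x) := by
  intro g
  have hmono := stdNormalCdf_strictMono
  -- continuity of Z on Ioi x
  have hZcont : ∀ H, x < H → ContinuousAt Z H := by
    intro H hH
    have hH0 : (0:ℝ) < H := hx.trans hH
    have hq : ContinuousAt (fun H' : ℝ => x / H') H :=
      continuousAt_const.div continuousAt_id hH0.ne'
    refine tendsto_order.2 ⟨fun a ha => ?_, fun a ha => ?_⟩
    · have h1 : stdNormalCdf a < x / H := by
        rw [← hZ H hH]; exact hmono ha
      filter_upwards [hq.eventually (eventually_gt_nhds h1), eventually_gt_nhds hH]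
        with H' h1' h2'
      have : stdNormalCdf a < stdNormalCdf (Z H') := by rw [hZ H' h2']; exact h1'
      exact hmono.lt_iff_lt.1 this
    · have h1 : x / H < stdNormalCdf a := by
        rw [← hZ H hH]; exact hmono ha
      filter_upwards [hq.eventually (eventually_lt_nhds h1), eventually_gt_nhds hH]
        with H' h1' h2'
      have : stdNormalCdf (Z H') < stdNormalCdf a := by rw [hZ H' h2']; exact h1'
      exact hmono.lt_iff_lt.1 this
  -- derivative of Z
  have hZd : ∀ H, x < H → HasDerivAt Z ((stdPdf (Z H))⁻¹ * (-x / H ^ 2)) H := by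
    intro H hH
    have hH0 : (0:ℝ) < H := hx.trans hH
    set y := x / H with hy
    have hy0 : 0 < y := div_pos hx hH0
    have hy1 : y < 1 := by rw [hy, div_lt_one hH0]; exact hH
    set W : ℝ → ℝ := fun t => Z (x / t) with hW
    have hxy : x / y = H := by rw [hy]; field_simp
    have hWa : W y = Z H := by simp only [hW]; rw [hxy]
    have hcont2 : ContinuousAt (fun t : ℝ => x / t) y :=
      continuousAt_const.div continuousAt_id hy0.ne'
    have hWc : ContinuousAt W y := by
      have hZc : ContinuousAt Z (x / y) := by rw [hxy]; exact hZcont H hH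
      exact hZc.comp hcont2
    have hfg : ∀ᶠ t in 𝓝 y, stdNormalCdf (W t) = t := by
      filter_upwards [Ioo_mem_nhds hy0 hy1] with t ht
      have ht0 : (0:ℝ) < t := ht.1
      have hxt : x < x / t := by
        rw [lt_div_iff₀ ht0]; nlinarith [ht.2]
      have := hZ (x / t) hxt
      simp only [hW]
      rw [this]; field_simp
    have hΦZ : HasDerivAt stdNormalCdf (stdPdf (W y)) (W y) := stdNormalCdf_hasDerivAt _
    have hWd : HasDerivAt W (stdPdf (W y))⁻¹ y :=
      HasDerivAt.of_local_left_inverse hWc hΦZ (stdPdf_pos _).ne' hfg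
    have hqd : HasDerivAt (fun t : ℝ => x / t) (-x / H ^ 2) H := by
      have h := (hasDerivAt_inv hH0.ne').const_mul x
      have he : (fun t : ℝ => x * t⁻¹) = fun t : ℝ => x / t := by
        funext t; rw [div_eq_mul_inv]
      rw [he] at h
      rwa [show -x / H ^ 2 = x * -(H ^ 2)⁻¹ by ring]
    have hcomp : HasDerivAt (fun t => W (x / t)) ((stdPdf (W y))⁻¹ * (-x / H ^ 2)) H := by
      have hWd' : HasDerivAt W (stdPdf (W y))⁻¹ ((fun t : ℝ => x / t) H) := by
        simpa only [← hy] using hWd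
      exact hWd'.comp H hqd
    have hev : (fun t => W (x / t)) =ᶠ[𝓝 H] Z := by
      filter_upwards [eventually_gt_nhds hH] with t ht
      have ht0 : (0:ℝ) < t := hx.trans ht
      simp only [hW]
      congr 1
      field_simp
    have hfinal := hcomp.congr_of_eventuallyEq hev.symm
    rwa [hWa] at hfinal
  have main : ∀ H > x,
      HasDerivAt g
        (stdNormalCdf (Z H + c) - (x / H) * Real.exp (-c * Z H - c ^ 2 / 2)) H ∧
      0 < stdNormalCdf (Z H + c) - (x / H) * Real.exp (-c * Z H - c ^ 2 / 2) := by
    intro H hH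
    have hH0 : (0:ℝ) < H := hx.trans hH
    have hZdH := hZd H hH
    have h1 : HasDerivAt (fun H' => stdNormalCdf (Z H' + c))
        (stdPdf (Z H + c) * ((stdPdf (Z H))⁻¹ * (-x / H ^ 2))) H :=
      by have := (stdNormalCdf_hasDerivAt (Z H + c)).comp H (hZdH.add_const c); exact this
    have hg : HasDerivAt g
        (1 * stdNormalCdf (Z H + c)
          + H * (stdPdf (Z H + c) * ((stdPdf (Z H))⁻¹ * (-x / H ^ 2)))) H :=
      (hasDerivAt_id H).mul h1
    have hratio := stdPdf_translate c (Z H)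
    have hpz := (stdPdf_pos (Z H)).ne'
    have hval : 1 * stdNormalCdf (Z H + c)
          + H * (stdPdf (Z H + c) * ((stdPdf (Z H))⁻¹ * (-x / H ^ 2)))
        = stdNormalCdf (Z H + c) - (x / H) * Real.exp (-c * Z H - c ^ 2 / 2) := by
      rw [hratio]
      field_simp
      ring
    rw [hval] at hg
    refine ⟨hg, ?_⟩
    have hki := key_ineq c hc (Z H)
    rw [hZ H hH] at hki
    linarith
  refine ⟨main, ?_⟩
  have hcontg : ContinuousOn g (Ioi x) :=
    fun H hH => ((main H hH).1.continuousAt).continuousWithinAt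
  refine strictMonoOn_of_deriv_pos (convex_Ioi x) hcontg ?_
  intro H hH
  rw [interior_Ioi] at hH
  rw [(main H hH).1.deriv]
  exact (main H hH).2
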